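/- Fix a fan Π_n(Δ) subdividing cone(Δ^n) with finitely many cones, and for each cone τ let h_τ ∈ ℕ be the minimum positive value of the height function h on integral points of τ (when it exists). Let h_tot be the least common multiple of the h_τ. Then after replacing the lattice ℤ of the target ray ℝ_{≥0} by h_tot·ℤ and the lattice of Π_n(Δ) by the kernel sublattice {(u_i) : ∑_j u_i^{(j)} ≡ 0 mod h_tot for all i}, the height map h : Π_n(Δ) → ℝ_{≥0} becomes combinatorially reduced: for every cone τ, the image of the lattice points of τ equals the lattice h_tot·ℤ_{≥0} of the image. -/
import Mathlib


/-!
STATEMENT 13 (making the height map combinatorially reduced, from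
Proposition 4.9): let `h_τ` be the minimum positive height of integral points
of a cone `τ` of `Π_n(Δ)` and let `h_tot` be the least common multiple of the
`h_τ` (encoded by the hypothesis that each `h_τ` exists and divides `h_tot`).
After replacing the lattice of the base ray by `h_tot·ℤ` and the lattice of
`Π_n(Δ)` by the sublattice of integral tuples whose heights are divisible by
`h_tot`, the height map becomes combinatorially reduced: for every cone `τ`,
the set of heights of sublattice points of `τ` is exactly `h_tot·ℤ_{≥0}`.
-/

open scoped BigOperators

/-- `cone(Δ^n)`: tuples of `n` points of `ℝ_{≥0}^r` having equal coordinate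
sums (common height). -/
def coneD (n r : ℕ) : Set (Fin n → Fin r → ℝ) :=
  {u | (∀ i j, 0 ≤ u i j) ∧ ∀ i i', ∑ j, u i j = ∑ j, u i' j}

/-- `cone(Δ × Δ^n)`: `(n+1)`-tuples, the extra point labelled `0 = none`. -/
def coneDP (n r : ℕ) : Set (Option (Fin n) → Fin r → ℝ) :=
  {w | (∀ a j, 0 ≤ w a j) ∧ ∀ a b, ∑ j, w a j = ∑ j, w b j}

/-- Relation prescribed by a side choice. -/
def ordRel : Ordering → ℝ → ℝ → Prop
  | .lt, a, b => a ≤ b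
  | .eq, a, b => a = b
  | .gt, a, b => b ≤ a

/-- Non-emptiness of the closed cell of the height-slice simplex determined by
a side choice `ε` relative to the hyperplanes `x_j = u_i^{(j)}`. -/
def cellNE {n r : ℕ} (u : Fin n → Fin r → ℝ) (ε : Fin n → Fin r → Ordering) : Prop :=
  ∃ x : Fin r → ℝ, (∀ j, 0 ≤ x j) ∧ (∀ i, ∑ j, x j = ∑ j, u i j) ∧
    ∀ i j, ordRel (ε i j) (x j) (u i j)

/-- Two tuples have the same combinatorial type of marked simplex-lattice
subdivision when the corresponding cells are non-empty simultaneously. -/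
def typeEquiv {n r : ℕ} (u u' : Fin n → Fin r → ℝ) : Prop :=
  ∀ ε : Fin n → Fin r → Ordering, cellNE u ε ↔ cellNE u' ε

/-- The cone of `Π_n(Δ)` determined by (the combinatorial type of) `u`:
the closure of its combinatorial-equivalence class. -/
def Cn {n r : ℕ} (u : Fin n → Fin r → ℝ) : Set (Fin n → Fin r → ℝ) :=
  closure {u' | u' ∈ coneD n r ∧ typeEquiv u u'}

/-- The projection `p : cone(Δ × Δ^n) → cone(Δ^n)`. -/
def projP {n r : ℕ} (w : Option (Fin n) → Fin r → ℝ) : Fin n → Fin r → ℝ :=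
  fun i => w (some i)

/-- Combinatorial equivalence for `(n+1)`-tuples: same type of the underlying
`n`-tuple, and the extra point `x = w none` compares identically with the
hyperplanes `x_j = u_i^{(j)}` and the boundary `x_j = 0`. -/
def wEquiv {n r : ℕ} (w w' : Option (Fin n) → Fin r → ℝ) : Prop :=
  typeEquiv (projP w) (projP w') ∧
  (∀ j, w none j = 0 ↔ w' none j = 0) ∧
  ∀ i j, (w none j ≤ w (some i) j ↔ w' none j ≤ w' (some i) j) ∧
         (w (some i) j ≤ w none j ↔ w' (some i) j ≤ w' none j)

/-- The cone of `Π_n^+(Δ)` determined by `w`. -/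
def CnP {n r : ℕ} (w : Option (Fin n) → Fin r → ℝ) :
    Set (Option (Fin n) → Fin r → ℝ) :=
  closure {w' | w' ∈ coneDP n r ∧ wEquiv w w'}

/-- Integral tuples. -/
def latticePt {n r : ℕ} (u : Fin n → Fin r → ℝ) : Prop :=
  ∀ i j, ∃ z : ℤ, u i j = (z : ℝ)

lemma coneD_isClosed (n r : ℕ) : IsClosed (coneD n r) := by
  have h1 : IsClosed {u : Fin n → Fin r → ℝ | ∀ i j, 0 ≤ u i j} := by
    have : {u : Fin n → Fin r → ℝ | ∀ i j, 0 ≤ u i j}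
        = ⋂ i, ⋂ j, {u : Fin n → Fin r → ℝ | 0 ≤ u i j} := by
      ext u; simp [Set.mem_iInter]
    rw [this]
    exact isClosed_iInter fun i => isClosed_iInter fun j =>
      isClosed_le continuous_const ((continuous_apply j).comp (continuous_apply i))
  have h2 : IsClosed {u : Fin n → Fin r → ℝ | ∀ i i', ∑ j, u i j = ∑ j, u i' j} := by
    have : {u : Fin n → Fin r → ℝ | ∀ i i', ∑ j, u i j = ∑ j, u i' j}
        = ⋂ i, ⋂ i', {u : Fin n → Fin r → ℝ | ∑ j, u i j = ∑ j, u i' j} := by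
      ext u; simp [Set.mem_iInter]
    rw [this]
    refine isClosed_iInter fun i => isClosed_iInter fun i' => isClosed_eq ?_ ?_ <;>
      exact continuous_finset_sum _ fun j _ =>
        (continuous_apply j).comp (continuous_apply _)
  exact h1.inter h2

lemma cellNE_smul {n r : ℕ} (u : Fin n → Fin r → ℝ) (ε : Fin n → Fin r → Ordering)
    (c : ℝ) (hc : 0 < c) (h : cellNE u ε) : cellNE (c • u) ε := by
  obtain ⟨x, hx0, hxs, hxr⟩ := h
  refine ⟨fun j => c * x j, fun j => mul_nonneg hc.le (hx0 j), fun i => ?_, fun i j => ?_⟩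
  · simp only [Pi.smul_apply, smul_eq_mul, ← Finset.mul_sum, hxs i]
  · have h' := hxr i j
    simp only [Pi.smul_apply, smul_eq_mul]
    cases hε : ε i j <;> rw [hε] at h' <;> simp only [ordRel] at h' ⊢ <;> nlinarith

lemma cellNE_smul_iff {n r : ℕ} (u : Fin n → Fin r → ℝ) (ε : Fin n → Fin r → Ordering)
    (c : ℝ) (hc : 0 < c) : cellNE (c • u) ε ↔ cellNE u ε := by
  constructor
  · intro h
    have := cellNE_smul (c • u) ε c⁻¹ (by positivity) h
    rwa [smul_smul, inv_mul_cancel₀ hc.ne', one_smul] at this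
  · exact cellNE_smul u ε c hc

lemma coneD_smul {n r : ℕ} (v : Fin n → Fin r → ℝ) (hv : v ∈ coneD n r)
    (c : ℝ) (hc : 0 ≤ c) : c • v ∈ coneD n r := by
  obtain ⟨h1, h2⟩ := hv
  refine ⟨fun i j => ?_, fun i i' => ?_⟩
  · exact mul_nonneg hc (h1 i j)
  · simp only [Pi.smul_apply, smul_eq_mul, ← Finset.mul_sum, h2 i i']

lemma Cn_smul {n r : ℕ} (u v : Fin n → Fin r → ℝ) (c : ℝ) (hc : 0 < c)
    (hv : v ∈ Cn u) : c • v ∈ Cn u := by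
  have hcont : Continuous (fun w : Fin n → Fin r → ℝ => c • w) := continuous_const_smul c
  have hmem : c • v ∈ (fun w : Fin n → Fin r → ℝ => c • w) ''
      closure {u' | u' ∈ coneD n r ∧ typeEquiv u u'} := ⟨v, hv, rfl⟩
  have h2 := (image_closure_subset_closure_image hcont) hmem
  refine closure_mono ?_ h2
  rintro _ ⟨w, ⟨hw1, hw2⟩, rfl⟩
  exact ⟨coneD_smul w hw1 c hc.le,
    fun ε => (hw2 ε).trans (cellNE_smul_iff w ε c hc).symm⟩

lemma Cn_zero_mem {n r : ℕ} (u : Fin n → Fin r → ℝ) (hu : u ∈ coneD n r) :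
    (0 : Fin n → Fin r → ℝ) ∈ Cn u := by
  have htend : Filter.Tendsto (fun c : ℝ => c • u)
      (nhdsWithin 0 (Set.Ioi 0)) (nhds 0) := by
    have h0 : Filter.Tendsto (fun c : ℝ => c • u) (nhds 0) (nhds ((0 : ℝ) • u)) :=
      ((continuous_id.smul continuous_const).tendsto 0)
    simpa using h0.mono_left nhdsWithin_le_nhds
  refine mem_closure_of_tendsto htend ?_
  filter_upwards [self_mem_nhdsWithin] with c hc
  exact ⟨coneD_smul u hu c (le_of_lt hc),
    fun ε => (cellNE_smul_iff u ε c hc).symm⟩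

theorem stmt13 (n r : ℕ) (h_tot : ℕ) (hpos : 0 < h_tot)
    -- each cone τ = `Cn u` has a minimum positive height `h_τ` of integral
    -- points, and `h_τ ∣ h_tot`
    (hdvd : ∀ u ∈ coneD n r, u ≠ 0 →
      ∃ hτ : ℕ, hτ ∣ h_tot ∧
        IsLeast {t : ℕ | 0 < t ∧
          ∃ v ∈ Cn u, latticePt v ∧ ∀ i, ∑ j, v i j = (t : ℝ)} hτ) :
    -- conclusion: the image under the height map of the sublattice points of
    -- each cone equals `h_tot · ℤ_{≥0}`, the lattice of the image ray
    ∀ u ∈ coneD n r, u ≠ 0 →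
      {t : ℝ | ∃ v ∈ Cn u, latticePt v ∧
          (∀ i, ∃ z : ℤ, ∑ j, v i j = (h_tot : ℝ) * z) ∧
          ∀ i, ∑ j, v i j = t}
        = {t : ℝ | ∃ m : ℕ, t = (h_tot : ℝ) * m} := by
  intro u hu hune
  have hn : 0 < n := by
    rcases n with _ | n
    · exact absurd (Subsingleton.elim u 0) hune
    · exact Nat.succ_pos _
  have hCnsub : Cn u ⊆ coneD n r :=
    closure_minimal (fun w hw => hw.1) (coneD_isClosed n r)
  ext t
  constructor
  · rintro ⟨v, hvC, _hvL, hdiv, hht⟩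
    set i0 : Fin n := ⟨0, hn⟩
    obtain ⟨z, hz⟩ := hdiv i0
    have hv0 : 0 ≤ ∑ j, v i0 j :=
      Finset.sum_nonneg fun j _ => (hCnsub hvC).1 i0 j
    have hz0 : (0 : ℝ) ≤ (z : ℝ) := by
      by_contra hneg
      push_neg at hneg
      have : (h_tot : ℝ) * z < 0 :=
        mul_neg_of_pos_of_neg (by exact_mod_cast hpos) hneg
      rw [← hz] at this; linarith
    refine ⟨z.toNat, ?_⟩
    rw [← hht i0, hz]
    congr 1
    exact_mod_cast (Int.toNat_of_nonneg (by exact_mod_cast hz0)).symm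
  · rintro ⟨m, rfl⟩
    obtain ⟨hτ, hτdvd, ⟨⟨hτpos, v, hvC, hvL, hvh⟩, -⟩⟩ := hdvd u hu hune
    rcases Nat.eq_zero_or_pos m with rfl | hm
    · refine ⟨0, Cn_zero_mem u hu, fun i j => ⟨0, by simp⟩, fun i => ⟨0, by simp⟩,
        fun i => by simp⟩
    · set k : ℕ := h_tot / hτ * m with hk
      have hkpos : 0 < k :=
        Nat.mul_pos (Nat.div_pos (Nat.le_of_dvd hpos hτdvd) hτpos) hm
      have hkh : (k : ℝ) * hτ = (h_tot : ℝ) * m := by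
        have : h_tot / hτ * m * hτ = h_tot * m := by
          rw [mul_comm (h_tot / hτ) m, mul_assoc, Nat.div_mul_cancel hτdvd, mul_comm]
        exact_mod_cast this
      refine ⟨(k : ℝ) • v, Cn_smul u v k (by exact_mod_cast hkpos) hvC,
        fun i j => ?_, fun i => ⟨(m : ℤ), ?_⟩, fun i => ?_⟩
      · obtain ⟨z, hz⟩ := hvL i j
        exact ⟨k * z, by simp [hz]⟩
      · simp only [Pi.smul_apply, smul_eq_mul, ← Finset.mul_sum, hvh i]
        push_cast
        rw [hkh]
      · simp only [Pi.smul_apply, smul_eq_mul, ← Finset.mul_sum, hvh i]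
        exact hkh
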